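/- Let X be a separable metric space and (f^t)_{t ≥ 0} a semiflow of maps f^t : X → X such that (t, x) ↦ f^t x is continuous. Let μ be a Borel probability measure on X. If Basin(μ) ≠ ∅, then μ is an invariant measure, i.e. f^t μ = μ for all t ≥ 0. -/

import Mathlib

open MeasureTheory Filter Topology Set

/-- The basin of a Borel probability measure `μ`: the set of points `x` such that the
empirical measures `(1/T) ∫₀^T δ_{f^t x} dt` converge weakly to `μ` as `T → ∞`,
expressed via test integrals against bounded continuous functions. -/
def basinOf {X : Type*} [TopologicalSpace X] [MeasurableSpace X]
    (f : ℝ → X → X) (μ : Measure X) : Set X :=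
  {x | ∀ g : BoundedContinuousFunction X ℝ,
    Tendsto (fun T : ℝ => (1 / T) * ∫ t in (0:ℝ)..T, g (f t x)) atTop
      (𝓝 (∫ y, g y ∂μ))}

/-- Let `X` be a separable metric space and `(f^t)_{t ≥ 0}` a semiflow
such that `(t, x) ↦ f^t x` is continuous. Let `μ` be a Borel probability measure on `X`.
If `Basin(μ) ≠ ∅`, then `μ` is invariant: `f^t μ = μ` for all `t ≥ 0`. -/
theorem stmt_3 {X : Type*} [MetricSpace X] [TopologicalSpace.SeparableSpace X]
    [MeasurableSpace X] [BorelSpace X]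
    (f : ℝ → X → X)
    (hf0 : f 0 = id)
    (hfadd : ∀ s t : ℝ, 0 ≤ s → 0 ≤ t → f (s + t) = f s ∘ f t)
    (hcont : ContinuousOn (fun p : ℝ × X => f p.1 p.2) (Set.Ici 0 ×ˢ Set.univ))
    (μ : Measure X) [IsProbabilityMeasure μ]
    (hne : (basinOf f μ).Nonempty) :
    ∀ t : ℝ, 0 ≤ t → μ.map (f t) = μ := by
  obtain ⟨x, hx⟩ := hne
  intro s hs
  -- continuity of `f s`
  have fs_cont : Continuous (f s) := by
    apply hcont.comp_continuous (Continuous.prodMk continuous_const continuous_id)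
    exact fun y => ⟨hs, Set.mem_univ y⟩
  have : IsProbabilityMeasure (μ.map (f s)) :=
    Measure.isProbabilityMeasure_map fs_cont.measurable.aemeasurable
  -- key: equality of integrals of real bounded continuous functions
  have key : ∀ g : BoundedContinuousFunction X ℝ,
      ∫ y, g y ∂(μ.map (f s)) = ∫ y, g y ∂μ := by
    intro g
    -- auxiliary continuous bounded function ψ on ℝ
    set ψ : ℝ → ℝ := fun t => g (f (max t 0) x) with hψ
    have ψcont : Continuous ψ := by
      apply g.continuous.comp
      apply hcont.comp_continuous
        (Continuous.prodMk (continuous_id.max continuous_const) continuous_const)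
      exact fun t => ⟨le_max_right (id t) 0, Set.mem_univ x⟩
    have ψint : ∀ a b : ℝ, IntervalIntegrable ψ volume a b :=
      fun a b => ψcont.intervalIntegrable a b
    -- Claim A : averages of ψ tend to ∫ g dμ
    have claimA : Tendsto (fun T : ℝ => (1 / T) * ∫ t in (0:ℝ)..T, ψ t) atTop
        (𝓝 (∫ y, g y ∂μ)) := by
      apply (hx g).congr'
      filter_upwards [eventually_ge_atTop (0:ℝ)] with T hT
      congr 1
      apply intervalIntegral.integral_congr
      intro t ht
      rw [Set.uIcc_of_le hT] at ht
      simp [hψ, max_eq_left ht.1]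
    -- Claim B : shifted averages also tend to ∫ g dμ
    have claimB : Tendsto (fun T : ℝ => (1 / T) * ∫ t in (0:ℝ)..T, ψ (t + s)) atTop
        (𝓝 (∫ y, g y ∂μ)) := by
      have h1 : Tendsto (fun T : ℝ => (1 / (T + s)) * ∫ t in (0:ℝ)..(T + s), ψ t) atTop
          (𝓝 (∫ y, g y ∂μ)) := claimA.comp (tendsto_atTop_add_const_right atTop s tendsto_id)
      have h2 : Tendsto (fun T : ℝ => (T + s) / T) atTop (𝓝 1) := by
        have := Tendsto.add (tendsto_const_nhds (x := (1:ℝ)))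
          (Tendsto.const_mul s tendsto_inv_atTop_zero)
        simpa using this.congr' (by
          filter_upwards [eventually_gt_atTop (0:ℝ)] with T hT
          field_simp)
      have h3 : Tendsto (fun T : ℝ => ((T + s) / T) * ((1 / (T + s)) * ∫ t in (0:ℝ)..(T + s), ψ t))
          atTop (𝓝 (∫ y, g y ∂μ)) := by
        simpa using h2.mul h1
      have h4 : Tendsto (fun T : ℝ => (1 / T) * ∫ t in (0:ℝ)..s, ψ t) atTop (𝓝 0) := by
        simpa using (tendsto_inv_atTop_zero (𝕜 := ℝ)).mul_const (∫ t in (0:ℝ)..s, ψ t)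
      have h5 := h3.sub h4
      rw [sub_zero] at h5
      apply h5.congr'
      filter_upwards [eventually_gt_atTop (0:ℝ)] with T hT
      have hTs : T + s > 0 := by linarith
      have hshift : ∫ t in (0:ℝ)..T, ψ (t + s) = ∫ t in s..(T + s), ψ t := by
        simpa using intervalIntegral.integral_comp_add_right (a := (0:ℝ)) (b := T) ψ s
      have hsplit : ∫ t in (0:ℝ)..(T + s), ψ t
          = (∫ t in (0:ℝ)..s, ψ t) + ∫ t in s..(T + s), ψ t :=
        (intervalIntegral.integral_add_adjacent_intervals (ψint 0 s) (ψint s (T + s))).symm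
      rw [hshift, hsplit]
      field_simp
      ring
    -- the composed test function
    set h : BoundedContinuousFunction X ℝ := g.compContinuous ⟨f s, fs_cont⟩ with hh
    have claimC : Tendsto (fun T : ℝ => (1 / T) * ∫ t in (0:ℝ)..T, ψ (t + s)) atTop
        (𝓝 (∫ y, h y ∂μ)) := by
      apply (hx h).congr'
      filter_upwards [eventually_ge_atTop (0:ℝ)] with T hT
      congr 1
      apply intervalIntegral.integral_congr
      intro t ht
      rw [Set.uIcc_of_le hT] at ht
      have ht0 : 0 ≤ t := ht.1
      have hmax : max (t + s) 0 = t + s := max_eq_left (by linarith)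
      have : f (t + s) x = f s (f t x) := by
        have := hfadd s t hs ht0
        rw [add_comm t s, this]; rfl
      simp [hψ, hh, hmax, this]
    have hint : ∫ y, h y ∂μ = ∫ y, g y ∂μ := tendsto_nhds_unique claimC claimB
    rw [← hint, hh]
    rw [integral_map fs_cont.measurable.aemeasurable g.continuous.measurable.aestronglyMeasurable]
    rfl
  -- reduce to equality of lintegrals of nonnegative test functions
  apply ext_of_forall_lintegral_eq_of_IsFiniteMeasure
  intro q
  set g : BoundedContinuousFunction X ℝ :=
    BoundedContinuousFunction.comp _ isometry_subtype_coe.lipschitz q with hg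
  have e1 := BoundedContinuousFunction.toReal_lintegral_coe_eq_integral q (μ.map (f s))
  have e2 := BoundedContinuousFunction.toReal_lintegral_coe_eq_integral q μ
  have hq : ∫ y, (q y : ℝ) ∂(μ.map (f s)) = ∫ y, (q y : ℝ) ∂μ := key g
  rw [← ENNReal.toReal_eq_toReal_iff' (q.lintegral_lt_top_of_nnreal _).ne
    (q.lintegral_lt_top_of_nnreal _).ne, e1, e2]
  exact hq
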